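/- Fix x ∈ ℝ^{d₁}, a d₃×d₂ real matrix W₂, and v ∈ ℝ^{d₃}, and define f on d₂×d₁ real matrices by f(W) = ⟨v, relu(W₂ · relu(W x))⟩, the output of a three-layer ReLU network in the first-layer weights. If W₀ satisfies (W₀ x)_j ≠ 0 for every j ∈ {1,…,d₂} and (W₂ · relu(W₀ x))_i ≠ 0 for every i ∈ {1,…,d₃}, then f is differentiable at W₀ and rank(∇f(W₀)) ≤ 1. -/
import Mathlib

/-- The ReLU function on the reals. -/
def relu (z : ℝ) : ℝ := max z 0

/-- The gradient matrix of `f : ℝ^{n×m} → ℝ` at `W₀`: its `(i,j)` entry is the Fréchet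
derivative of `f` at `W₀` evaluated at the matrix unit `E_{i,j}`. -/
noncomputable def gradMatrix {n m : ℕ} (f : (Fin n → Fin m → ℝ) → ℝ)
    (W₀ : Fin n → Fin m → ℝ) : Matrix (Fin n) (Fin m) ℝ :=
  Matrix.of fun i j => fderiv ℝ f W₀ (fun i' j' => if i' = i ∧ j' = j then 1 else 0)

/-- For the three-layer ReLU network output
`f(W) = ⟨v, relu(W₂ · relu(W x))⟩` in the first-layer weights, if `(W₀ x)_j ≠ 0` for
every `j` and `(W₂ · relu(W₀ x))_i ≠ 0` for every `i`, then `f` is differentiable at `W₀`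
and its gradient matrix has rank at most 1. -/
theorem stmt10 {d₁ d₂ d₃ : ℕ} (x : Fin d₁ → ℝ) (W₂ : Matrix (Fin d₃) (Fin d₂) ℝ)
    (v : Fin d₃ → ℝ) (W₀ : Fin d₂ → Fin d₁ → ℝ)
    (h₁ : ∀ j, (∑ l, W₀ j l * x l) ≠ 0)
    (h₂ : ∀ i, (∑ j, W₂ i j * relu (∑ l, W₀ j l * x l)) ≠ 0) :
    DifferentiableAt ℝ
      (fun W : Fin d₂ → Fin d₁ → ℝ =>
        ∑ i, v i * relu (∑ j, W₂ i j * relu (∑ l, W j l * x l))) W₀ ∧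
    (gradMatrix
        (fun W => ∑ i, v i * relu (∑ j, W₂ i j * relu (∑ l, W j l * x l))) W₀).rank
      ≤ 1 := by
  classical
  -- signs
  set s' : Fin d₂ → ℝ := fun j => if 0 < ∑ l, W₀ j l * x l then 1 else 0 with hs'
  set s : Fin d₃ → ℝ := fun i =>
    if 0 < ∑ j, W₂ i j * relu (∑ l, W₀ j l * x l) then 1 else 0 with hs
  set c : Fin d₂ → ℝ := fun j => ∑ i, v i * s i * W₂ i j * s' j with hc
  -- the candidate derivative as a continuous linear map
  set L : (Fin d₂ → Fin d₁ → ℝ) →L[ℝ] ℝ :=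
    LinearMap.toContinuousLinearMap
      (∑ j, ∑ l, (c j * x l) •
        ((LinearMap.proj l).comp (LinearMap.proj j : (Fin d₂ → Fin d₁ → ℝ) →ₗ[ℝ] _)))
    with hL
  have hLapp : ∀ H : Fin d₂ → Fin d₁ → ℝ, L H = ∑ j, ∑ l, c j * x l * H j l := by
    intro H
    simp [hL, LinearMap.sum_apply, smul_eq_mul]
  -- continuity facts
  have hucont : ∀ j, Continuous fun W : Fin d₂ → Fin d₁ → ℝ => ∑ l, W j l * x l := by
    intro j; fun_prop
  have hrelu : Continuous relu := continuous_id.max continuous_const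
  have hacont : ∀ i, Continuous fun W : Fin d₂ → Fin d₁ → ℝ =>
      ∑ j, W₂ i j * relu (∑ l, W j l * x l) := by
    intro i
    apply continuous_finset_sum
    intro j _
    exact continuous_const.mul (hrelu.comp (hucont j))
  -- eventual sign stability
  have key : ∀ (g : (Fin d₂ → Fin d₁ → ℝ) → ℝ), Continuous g → g W₀ ≠ 0 →
      ∀ᶠ W in nhds W₀, relu (g W) = (if 0 < g W₀ then (1:ℝ) else 0) * g W := by
    intro g hg hne
    rcases hne.lt_or_gt with h | h
    · have : ∀ᶠ W in nhds W₀, g W < 0 :=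
        (hg.tendsto W₀).eventually (gt_mem_nhds h)
      filter_upwards [this] with W hW
      simp [relu, max_eq_right hW.le, if_neg (not_lt.2 h.le)]
    · have : ∀ᶠ W in nhds W₀, 0 < g W :=
        (hg.tendsto W₀).eventually (lt_mem_nhds h)
      filter_upwards [this] with W hW
      simp [relu, max_eq_left hW.le, if_pos h]
  have hinner : ∀ᶠ W in nhds W₀, ∀ j,
      relu (∑ l, W j l * x l) = s' j * ∑ l, W j l * x l := by
    rw [Filter.eventually_all]
    intro j
    exact key _ (hucont j) (h₁ j)
  have houter : ∀ᶠ W in nhds W₀, ∀ i,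
      relu (∑ j, W₂ i j * relu (∑ l, W j l * x l)) =
        s i * ∑ j, W₂ i j * relu (∑ l, W j l * x l) := by
    rw [Filter.eventually_all]
    intro i
    exact key _ (hacont i) (h₂ i)
  -- eventual equality with L
  have heq : (fun W : Fin d₂ → Fin d₁ → ℝ =>
      ∑ i, v i * relu (∑ j, W₂ i j * relu (∑ l, W j l * x l)))
      =ᶠ[nhds W₀] fun W => L W := by
    filter_upwards [hinner, houter] with W hin hout
    rw [hLapp]
    calc ∑ i, v i * relu (∑ j, W₂ i j * relu (∑ l, W j l * x l))
        = ∑ i, v i * (s i * ∑ j, W₂ i j * (s' j * ∑ l, W j l * x l)) := by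
          refine Finset.sum_congr rfl fun i _ => ?_
          rw [hout i]
          congr 2
          exact Finset.sum_congr rfl fun j _ => by rw [hin j]
      _ = ∑ j, ∑ l, c j * x l * W j l := by
          simp only [hc, Finset.mul_sum, Finset.sum_mul]
          rw [Finset.sum_comm]
          refine Finset.sum_congr rfl fun j _ => ?_
          rw [Finset.sum_comm]
          exact Finset.sum_congr rfl fun l _ => Finset.sum_congr rfl fun i _ => by ring
  have hF : HasFDerivAt (fun W : Fin d₂ → Fin d₁ → ℝ =>
      ∑ i, v i * relu (∑ j, W₂ i j * relu (∑ l, W j l * x l))) L W₀ :=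
    (L.hasFDerivAt).congr_of_eventuallyEq heq
  refine ⟨hF.differentiableAt, ?_⟩
  have hgrad : gradMatrix
      (fun W => ∑ i, v i * relu (∑ j, W₂ i j * relu (∑ l, W j l * x l))) W₀ =
      Matrix.vecMulVec c x := by
    ext i j
    rw [gradMatrix, Matrix.of_apply, hF.fderiv, hLapp]
    simp only [Matrix.vecMulVec_apply]
    rw [Finset.sum_eq_single i]
    · rw [Finset.sum_eq_single j]
      · simp
      · intro b _ hb; simp [hb]
      · intro h; exact absurd (Finset.mem_univ j) h
    · intro b _ hb
      apply Finset.sum_eq_zero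
      intro l _
      simp [hb]
    · intro h; exact absurd (Finset.mem_univ i) h
  rw [hgrad, Matrix.vecMulVec_eq (Fin 1)]
  calc (Matrix.replicateCol (Fin 1) c * Matrix.replicateRow (Fin 1) x).rank
      ≤ (Matrix.replicateCol (Fin 1) c).rank := Matrix.rank_mul_le_left _ _
    _ ≤ Fintype.card (Fin 1) := Matrix.rank_le_card_width _
    _ = 1 := by simp
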